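/- arXiv:2602.14123 — 2 statements merged into one kernel-verified Lean document; each statement's English description precedes it below -/
import Mathlib

section
/- Let A, B be positive definite n×n complex matrices with X = (A^{1/2} B A^{1/2})^{1/2} and Y = B^{1/2} A^{1/2}. If |A + Y| = A + |Y|, then Y is self-adjoint, i.e., A^{1/2} B^{1/2} = B^{1/2} A^{1/2}, and hence AB = BA. -/
open Matrix
open scoped ComplexOrder

open Classical in
/-- The positive square root of a positive semidefinite matrix (junk value `0` otherwise). -/
noncomputable def msqrt {n : Type*} [Fintype n] [DecidableEq n] (A : Matrix n n ℂ) :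
    Matrix n n ℂ :=
  if h : A.PosSemidef then (h.1.eigenvectorUnitary : Matrix n n ℂ) *
    diagonal ((↑) ∘ (√·) ∘ h.1.eigenvalues) * (star h.1.eigenvectorUnitary : Matrix n n ℂ) else 0

/-- The geometric mean `P # Q = P^{1/2} (P^{-1/2} Q P^{-1/2})^{1/2} P^{1/2}`. -/
noncomputable def geoMean {n : Type*} [Fintype n] [DecidableEq n] (P Q : Matrix n n ℂ) :
    Matrix n n ℂ :=
  msqrt P * msqrt ((msqrt P)⁻¹ * Q * (msqrt P)⁻¹) * msqrt P

noncomputable def Matrix.PosSemidef.sqrt {n : Type*} [Fintype n] [DecidableEq n] {A : Matrix n n ℂ}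
    (h : A.PosSemidef) : Matrix n n ℂ :=
  (h.1.eigenvectorUnitary : Matrix n n ℂ) *
    diagonal ((↑) ∘ (√·) ∘ h.1.eigenvalues) * (star h.1.eigenvectorUnitary : Matrix n n ℂ)

open scoped MatrixOrder in
lemma Matrix.PosSemidef.sqrt_eq_cfc {n : Type*} [Fintype n] [DecidableEq n] {A : Matrix n n ℂ}
    (h : A.PosSemidef) : h.sqrt = CFC.sqrt A := by
  rw [CFC.sqrt_eq_cfc, cfc_nnreal_eq_real _ A h.nonneg, h.1.cfc_eq]
  simp only [IsHermitian.cfc, Matrix.PosSemidef.sqrt, Unitary.conjStarAlgAut_apply]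
  congr 3
  funext i
  simp [Real.coe_sqrt, max_eq_left (h.eigenvalues_nonneg i)]

open scoped MatrixOrder in
lemma Matrix.PosSemidef.posSemidef_sqrt {n : Type*} [Fintype n] [DecidableEq n] {A : Matrix n n ℂ}
    (h : A.PosSemidef) : h.sqrt.PosSemidef := by
  rw [h.sqrt_eq_cfc]; exact (CFC.sqrt_nonneg A).posSemidef

open scoped MatrixOrder in
lemma Matrix.PosSemidef.sqrt_mul_self {n : Type*} [Fintype n] [DecidableEq n] {A : Matrix n n ℂ}
    (h : A.PosSemidef) : h.sqrt * h.sqrt = A := by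
  rw [h.sqrt_eq_cfc]; exact CFC.sqrt_mul_sqrt_self A h.nonneg

open scoped MatrixOrder in
lemma Matrix.PosSemidef.sqrt_sq {n : Type*} [Fintype n] [DecidableEq n] {A : Matrix n n ℂ}
    (h : A.PosSemidef) : (h.pow 2).sqrt = A := by
  rw [Matrix.PosSemidef.sqrt_eq_cfc]; exact CFC.sqrt_sq A h.nonneg

lemma trace_mul_conjTranspose_self_eq_zero' {n : Type*} [Fintype n]
    (M : Matrix n n ℂ) (h : trace (M * Mᴴ) = 0) : M = 0 := by
  have hdiag : ∀ i, (M * Mᴴ) i i = dotProduct (M i) (star (M i)) := by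
    intro i
    simp [mul_apply, dotProduct, conjTranspose_apply]
  have hnn : ∀ i ∈ Finset.univ, (0:ℂ) ≤ (M * Mᴴ) i i := by
    intro i _
    rw [hdiag]
    exact dotProduct_self_star_nonneg _
  rw [trace] at h
  have h0 := (Finset.sum_eq_zero_iff_of_nonneg hnn).mp (by simpa [Matrix.diag] using h)
  ext i j
  have hi := h0 i (Finset.mem_univ i)
  rw [hdiag] at hi
  have := dotProduct_self_star_eq_zero.mp hi
  simpa using congrFun this j

lemma msqrt_of_posSemidef {n : Type*} [Fintype n] [DecidableEq n] {A : Matrix n n ℂ}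
    (h : A.PosSemidef) : msqrt A = h.sqrt := by
  rw [msqrt, dif_pos h]
  rfl

theorem stmt9 {n : Type*} [Fintype n] [DecidableEq n] (A B : Matrix n n ℂ)
    (hA : A.PosDef) (hB : B.PosDef)
    (X : Matrix n n ℂ) (hX : X = msqrt (msqrt A * B * msqrt A))
    (Y : Matrix n n ℂ) (hY : Y = msqrt B * msqrt A)
    (h : msqrt ((A + Y)ᴴ * (A + Y)) = A + msqrt (Yᴴ * Y)) :
    Yᴴ = Y ∧ msqrt A * msqrt B = msqrt B * msqrt A ∧ A * B = B * A := by
  have hAps := hA.posSemidef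
  have hBps := hB.posSemidef
  obtain ⟨a, ha⟩ : ∃ a, a = msqrt A := ⟨_, rfl⟩
  obtain ⟨b, hb⟩ : ∃ b, b = msqrt B := ⟨_, rfl⟩
  rw [← ha] at hX hY
  rw [← hb] at hY
  have haps : a.PosSemidef := by rw [ha, msqrt_of_posSemidef hAps]; exact hAps.posSemidef_sqrt
  have hbps : b.PosSemidef := by rw [hb, msqrt_of_posSemidef hBps]; exact hBps.posSemidef_sqrt
  have haa : a * a = A := by rw [ha, msqrt_of_posSemidef hAps]; exact hAps.sqrt_mul_self
  have hbb : b * b = B := by rw [hb, msqrt_of_posSemidef hBps]; exact hBps.sqrt_mul_self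
  have haH : aᴴ = a := haps.isHermitian
  have hbH : bᴴ = b := hbps.isHermitian
  have hAH : Aᴴ = A := hA.isHermitian
  -- invertibility of a
  have hdetA : IsUnit A.det := hA.det_pos.ne'.isUnit
  have hdeta : IsUnit a.det := by
    have : a.det * a.det = A.det := by rw [← det_mul, haa]
    exact isUnit_of_mul_isUnit_left (this ▸ hdetA)
  have haInv : a⁻¹ * a = 1 := nonsing_inv_mul a hdeta
  have haInv' : a * a⁻¹ = 1 := mul_nonsing_inv a hdeta
  have hinvA : a⁻¹ * A = a := by rw [← haa, ← mul_assoc, haInv, one_mul]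
  have hAinv : A * a⁻¹ = a := by rw [← haa, mul_assoc, haInv', mul_one]
  -- X
  have haBa : (a * B * a).PosSemidef := by
    have := hBps.conjTranspose_mul_mul_same a
    rwa [haH] at this
  have hXps : X.PosSemidef := by
    rw [hX, msqrt_of_posSemidef haBa]; exact haBa.posSemidef_sqrt
  have hXX : X * X = a * B * a := by
    rw [hX, msqrt_of_posSemidef haBa]; exact haBa.sqrt_mul_self
  have hXH : Xᴴ = X := hXps.isHermitian
  have hYH : Yᴴ = a * b := by rw [hY, conjTranspose_mul, haH, hbH]
  have hYYX : Yᴴ * Y = X * X := by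
    rw [hYH, hY, hXX, ← hbb]; noncomm_ring
  -- invertibility of X
  have hdetX : IsUnit X.det := by
    have h1 : X.det * X.det = a.det * B.det * a.det := by
      rw [← det_mul, hXX, det_mul, det_mul]
    exact isUnit_of_mul_isUnit_left
      (h1 ▸ ((hdeta.mul hB.det_pos.ne'.isUnit).mul hdeta))
  have hXInv : X⁻¹ * X = 1 := nonsing_inv_mul X hdetX
  have hXInv' : X * X⁻¹ = 1 := mul_nonsing_inv X hdetX
  -- hypothesis squared
  have hAYps : ((A + Y)ᴴ * (A + Y)).PosSemidef := posSemidef_conjTranspose_mul_self _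
  have hsq : (A + Y)ᴴ * (A + Y) = (A + X) * (A + X) := by
    have h1 : msqrt ((A + Y)ᴴ * (A + Y)) * msqrt ((A + Y)ᴴ * (A + Y)) = (A + Y)ᴴ * (A + Y) := by
      rw [msqrt_of_posSemidef hAYps]; exact hAYps.sqrt_mul_self
    have h2 : msqrt (Yᴴ * Y) = X := by
      rw [hYYX, ← pow_two]
      rw [msqrt_of_posSemidef (hXps.pow 2), hXps.sqrt_sq]
    rw [h2] at h
    rw [← h1, h]
  -- eq1 : A * Y + Yᴴ * A = A * X + X * A
  have eq1 : A * Y + Yᴴ * A = A * X + X * A := by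
    have expand : A * A + (A * Y + Yᴴ * A) + Yᴴ * Y = A * A + (A * X + X * A) + X * X := by
      have := hsq
      rw [conjTranspose_add, hAH] at this
      linear_combination (norm := noncomm_ring) this
    rw [hYYX] at expand
    have := add_right_cancel expand
    exact add_left_cancel this
  -- eq2 : trace Y + trace Yᴴ = trace X + trace X
  have key2 : ∀ Z : Matrix n n ℂ, trace (a⁻¹ * (A * Z) * a⁻¹) = trace Z := by
    intro Z
    rw [trace_mul_cycle]
    rw [show a⁻¹ * a⁻¹ * (A * Z) = Z by
      rw [mul_assoc, ← mul_assoc a⁻¹ A Z, hinvA, ← mul_assoc, haInv, one_mul]]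
  have key3 : ∀ Z : Matrix n n ℂ, trace (a⁻¹ * (Z * A) * a⁻¹) = trace Z := by
    intro Z
    rw [show a⁻¹ * (Z * A) * a⁻¹ = a⁻¹ * Z * a by
      rw [mul_assoc, mul_assoc Z A a⁻¹, hAinv, ← mul_assoc]]
    rw [trace_mul_cycle, haInv', one_mul]
  have eq2 : trace Y + trace Yᴴ = trace X + trace X := by
    have := congrArg (fun M => trace (a⁻¹ * M * a⁻¹)) eq1
    simp only [mul_add, add_mul, trace_add] at this
    rw [key2 Y, key3 Yᴴ, key2 X, key3 X] at this
    exact this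
  -- the partial isometry
  obtain ⟨V, hV⟩ : ∃ V, V = Y * X⁻¹ := ⟨_, rfl⟩
  have hVX : V * X = Y := by rw [hV, mul_assoc, hXInv, mul_one]
  have hVV : Vᴴ * V = 1 := by
    rw [hV, conjTranspose_mul, conjTranspose_nonsing_inv, hXH]
    calc X⁻¹ * Yᴴ * (Y * X⁻¹) = X⁻¹ * (Yᴴ * Y) * X⁻¹ := by noncomm_ring
    _ = X⁻¹ * (X * X) * X⁻¹ := by rw [hYYX]
    _ = (X⁻¹ * X) * (X * X⁻¹) := by noncomm_ring
    _ = 1 := by rw [hXInv, hXInv', one_mul]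
  have hVV' : V * Vᴴ = 1 := mul_eq_one_comm.mp hVV
  -- c = sqrt X
  obtain ⟨c, hc⟩ : ∃ c, c = msqrt X := ⟨_, rfl⟩
  have hcps : c.PosSemidef := by rw [hc, msqrt_of_posSemidef hXps]; exact hXps.posSemidef_sqrt
  have hcc : c * c = X := by rw [hc, msqrt_of_posSemidef hXps]; exact hXps.sqrt_mul_self
  have hcH : cᴴ = c := hcps.isHermitian
  have hdetc : IsUnit c.det := by
    have : c.det * c.det = X.det := by rw [← det_mul, hcc]
    exact isUnit_of_mul_isUnit_left (this ▸ hdetX)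
  -- M = c (1 - V) is zero
  have key : c * (1 - V) = 0 := by
    apply trace_mul_conjTranspose_self_eq_zero'
    have hsubH : (1 - V)ᴴ = 1 - Vᴴ := by rw [conjTranspose_sub, conjTranspose_one]
    have hM1 : (c * (1 - V)) * (c * (1 - V))ᴴ = c * ((1 - V - Vᴴ + 1) * c) := by
      rw [conjTranspose_mul, hsubH, hcH]
      calc c * (1 - V) * ((1 - Vᴴ) * c) = c * ((1 - V - Vᴴ + V * Vᴴ) * c) := by noncomm_ring
      _ = c * ((1 - V - Vᴴ + 1) * c) := by rw [hVV']
    have htr : trace (c * ((1 - V - Vᴴ + 1) * c)) =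
        trace X + trace X - trace (V * X) - trace (Vᴴ * X) := by
      rw [trace_mul_comm, mul_assoc, hcc]
      rw [show (1 - V - Vᴴ + 1) * X = X - V * X - Vᴴ * X + X from by noncomm_ring]
      rw [trace_add, trace_sub, trace_sub]
      ring
    have hVX' : trace (V * X) = trace Y := by rw [hVX]
    have hVHX : trace (Vᴴ * X) = trace Yᴴ := by
      rw [show Vᴴ * X = (X * V)ᴴ from by rw [conjTranspose_mul, hXH]]
      rw [trace_conjTranspose, trace_mul_comm, hVX, ← trace_conjTranspose]
    rw [hM1, htr, hVX', hVHX, ← eq2]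
    ring
  have hVone : V = 1 := by
    have h0 := congrArg (fun M => c⁻¹ * M) key
    simp only [mul_zero] at h0
    rw [← mul_assoc, nonsing_inv_mul c hdetc, one_mul] at h0
    exact (sub_eq_zero.mp h0).symm
  have hYX : Y = X := by rw [← hVX, hVone, one_mul]
  have hYHY : Yᴴ = Y := by rw [hYX, hXH]
  have hab : a * b = b * a := by
    have h1 := hYHY
    rw [hYH, hY] at h1
    exact h1
  refine ⟨hYHY, by rw [← ha, ← hb]; exact hab, ?_⟩
  calc A * B = a * a * (b * b) := by rw [haa, hbb]
  _ = a * (a * b) * b := by noncomm_ring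
  _ = a * (b * a) * b := by rw [hab]
  _ = (a * b) * (a * b) := by noncomm_ring
  _ = (b * a) * (b * a) := by rw [hab]
  _ = b * (a * b) * a := by noncomm_ring
  _ = b * (b * a) * a := by rw [hab]
  _ = b * b * (a * a) := by noncomm_ring
  _ = B * A := by rw [haa, hbb]
end

section
/- Let A, B be positive definite n×n complex matrices. Then trace(A^{1/2} B^{1/2}) ≤ trace((A^{1/2} B A^{1/2})^{1/2}), with equality if and only if A^{1/2} B^{1/2} is positive semidefinite (equivalently AB = BA). -/
open Matrix
open scoped ComplexOrder

open scoped MatrixOrder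

lemma my_msqrt_eq {n : Type*} [Fintype n] [DecidableEq n] {A : Matrix n n ℂ}
    (hA : A.PosSemidef) : msqrt A = CFC.sqrt A := by
  rw [CFC.sqrt_eq_cfc, cfc_nnreal_eq_real _ A hA.nonneg, hA.1.cfc_eq]
  unfold msqrt
  rw [dif_pos hA]
  simp only [IsHermitian.cfc, Unitary.conjStarAlgAut_apply]
  congr 3
  funext i
  simp only [Function.comp_apply]
  rw [Real.sqrt]
  rfl

open scoped ComplexOrder in
lemma my_diag_nonneg {n : Type*} [Fintype n] [DecidableEq n] {M : Matrix n n ℂ}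
    (hM : M.PosSemidef) (i : n) : 0 ≤ M i i :=
  hM.diag_nonneg

open scoped ComplexOrder in
lemma my_trace_nonneg {n : Type*} [Fintype n] [DecidableEq n] {M : Matrix n n ℂ}
    (hM : M.PosSemidef) : 0 ≤ M.trace :=
  Finset.sum_nonneg fun i _ => my_diag_nonneg hM i

lemma my_trace_zero {n : Type*} [Fintype n] [DecidableEq n] {G : Matrix n n ℂ}
    (h : (G * Gᴴ).trace = 0) : G = 0 := by
  have hre : (∑ i : n, ∑ j : n, Complex.normSq (G i j) : ℝ) = 0 := by
    have : (G * Gᴴ).trace = ((∑ i : n, ∑ j : n, Complex.normSq (G i j) : ℝ) : ℂ) := by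
      simp only [Matrix.trace, Matrix.diag, Matrix.mul_apply, Matrix.conjTranspose_apply]
      push_cast
      refine Finset.sum_congr rfl fun i _ => Finset.sum_congr rfl fun j _ => ?_
      rw [← Complex.mul_conj]
      rfl
    rw [this] at h
    exact_mod_cast h
  have hij : ∀ i ∈ Finset.univ, ∀ j ∈ (Finset.univ : Finset n), Complex.normSq (G i j) = 0 := by
    have h1 := (Finset.sum_eq_zero_iff_of_nonneg (fun i _ =>
      Finset.sum_nonneg fun j _ => Complex.normSq_nonneg (G i j))).mp hre
    intro i hi j hj
    exact (Finset.sum_eq_zero_iff_of_nonneg (fun j _ => Complex.normSq_nonneg (G i j))).mp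
      (h1 i hi) j hj
  ext i j
  exact Complex.normSq_eq_zero.mp (hij i (Finset.mem_univ i) j (Finset.mem_univ j))

open scoped ComplexOrder in
theorem stmt16 {n : Type*} [Fintype n] [DecidableEq n] (A B : Matrix n n ℂ)
    (hA : A.PosDef) (hB : B.PosDef) :
    (msqrt A * msqrt B).trace ≤ (msqrt (msqrt A * B * msqrt A)).trace ∧
      ((msqrt A * msqrt B).trace = (msqrt (msqrt A * B * msqrt A)).trace ↔
        (msqrt A * msqrt B).PosSemidef) := by
  have hAps := hA.posSemidef
  have hBps := hB.posSemidef
  set P := CFC.sqrt A with hPdef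
  set Q := CFC.sqrt B with hQdef
  have hmsA : msqrt A = P := my_msqrt_eq hAps
  have hmsB : msqrt B = Q := my_msqrt_eq hBps
  have hP : P.PosSemidef := (CFC.sqrt_nonneg A).posSemidef
  have hQ : Q.PosSemidef := (CFC.sqrt_nonneg B).posSemidef
  have hPP : P * P = A := CFC.sqrt_mul_sqrt_self A hAps.nonneg
  have hQQ : Q * Q = B := CFC.sqrt_mul_sqrt_self B hBps.nonneg
  have hPH : Pᴴ = P := hP.isHermitian
  have hQH : Qᴴ = Q := hQ.isHermitian
  have hT : (P * B * P).PosSemidef := by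
    have := hBps.conjTranspose_mul_mul_same P
    rwa [hPH] at this
  set S := CFC.sqrt (P * B * P) with hSdef
  have hmsT : msqrt (P * B * P) = S := my_msqrt_eq hT
  have hS : S.PosSemidef := (CFC.sqrt_nonneg _).posSemidef
  have hSS : S * S = P * B * P := CFC.sqrt_mul_sqrt_self _ hT.nonneg
  have hSH : Sᴴ = S := hS.isHermitian
  -- invertibility
  have hdetA : IsUnit A.det := hA.det_pos.ne'.isUnit
  have hdetB : IsUnit B.det := hB.det_pos.ne'.isUnit
  have hdetP : IsUnit P.det := by
    have h1 : P.det * P.det = A.det := by rw [← Matrix.det_mul, hPP]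
    exact isUnit_of_mul_isUnit_left (h1 ▸ hdetA)
  have hdetT : IsUnit (P * B * P).det := by
    rw [Matrix.det_mul, Matrix.det_mul]
    exact (hdetP.mul hdetB).mul hdetP
  have hdetS : IsUnit S.det := by
    have h1 : S.det * S.det = (P * B * P).det := by rw [← Matrix.det_mul, hSS]
    exact isUnit_of_mul_isUnit_left (h1 ▸ hdetT)
  -- unitary U with  Q * P = U * S
  set U := Q * P * S⁻¹ with hUdef
  have hUS : U * S = Q * P := by
    rw [hUdef, Matrix.mul_assoc, Matrix.nonsing_inv_mul S hdetS, Matrix.mul_one]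
  have hUH : Uᴴ = S⁻¹ * (P * Q) := by
    rw [hUdef, Matrix.conjTranspose_mul, Matrix.conjTranspose_mul,
      Matrix.conjTranspose_nonsing_inv, hSH, hPH, hQH]
  have hUU : Uᴴ * U = 1 := by
    rw [hUH, hUdef]
    have : S⁻¹ * (P * Q) * (Q * P * S⁻¹) = S⁻¹ * (P * (Q * Q) * P) * S⁻¹ := by
      noncomm_ring
    rw [this, hQQ, ← hSS]
    have : S⁻¹ * (S * S) * S⁻¹ = (S⁻¹ * S) * (S * S⁻¹) := by noncomm_ring
    rw [this, Matrix.nonsing_inv_mul S hdetS, Matrix.mul_nonsing_inv S hdetS, Matrix.mul_one]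
  -- the key PSD matrix
  set E := U - 1 with hEdef
  have keyPSD : (E * S * Eᴴ).PosSemidef := hS.mul_mul_conjTranspose_same E
  have hSU : S * Uᴴ = P * Q := by
    have h1 : (U * S)ᴴ = S * Uᴴ := by rw [Matrix.conjTranspose_mul, hSH]
    rw [← h1, hUS, Matrix.conjTranspose_mul, hPH, hQH]
  have htrQP : (Q * P).trace = (P * Q).trace := Matrix.trace_mul_comm Q P
  have keytr : (E * S * Eᴴ).trace = 2 * (S.trace - (P * Q).trace) := by
    have hEH : Eᴴ = Uᴴ - 1 := by
      rw [hEdef, Matrix.conjTranspose_sub, Matrix.conjTranspose_one]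
    have hexp : E * S * Eᴴ = U * S * Uᴴ - U * S - S * Uᴴ + S := by
      rw [hEdef, hEH]; noncomm_ring
    have htrUSU : (U * S * Uᴴ).trace = S.trace := by
      rw [Matrix.trace_mul_comm (U * S) Uᴴ, ← Matrix.mul_assoc, hUU, Matrix.one_mul]
    rw [hexp, Matrix.trace_add, Matrix.trace_sub, Matrix.trace_sub, htrUSU, hUS, hSU, htrQP]
    ring
  refine ⟨?_, ?_, ?_⟩
  · -- inequality
    rw [hmsA, hmsB, hmsT]
    have h0 := my_trace_nonneg keyPSD
    rw [keytr] at h0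
    rw [Complex.le_def] at h0 ⊢
    constructor
    · have := h0.1
      simp only [Complex.zero_re, Complex.mul_re, Complex.sub_re, Complex.sub_im,
        Complex.mul_im] at this ⊢
      norm_num at this ⊢
      linarith
    · have := h0.2
      simp only [Complex.zero_im, Complex.mul_im, Complex.sub_re, Complex.sub_im,
        Complex.mul_re] at this ⊢
      norm_num at this ⊢
      linarith
  · -- equality → PSD
    intro heq
    rw [hmsA, hmsB, hmsT] at heq
    have htr0 : (E * S * Eᴴ).trace = 0 := by rw [keytr, heq]; ring
    set F := CFC.sqrt S with hFdef
    have hFF : F * F = S := CFC.sqrt_mul_sqrt_self S hS.nonneg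
    have hFH : Fᴴ = F := (CFC.sqrt_nonneg S).posSemidef.isHermitian
    have hdetF : IsUnit F.det := by
      have h1 : F.det * F.det = S.det := by rw [← Matrix.det_mul, hFF]
      exact isUnit_of_mul_isUnit_left (h1 ▸ hdetS)
    have hfac : E * S * Eᴴ = (E * F) * (E * F)ᴴ := by
      rw [Matrix.conjTranspose_mul, hFH, ← hFF]; noncomm_ring
    rw [hfac] at htr0
    have hEF : E * F = 0 := my_trace_zero htr0
    have hE0 : E = 0 := by
      have := congrArg (· * F⁻¹) hEF
      simpa [Matrix.mul_assoc, Matrix.mul_nonsing_inv F hdetF] using this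
    have hU1 : U = 1 := by
      have := sub_eq_zero.mp hE0
      exact this
    have hQPS : Q * P = S := by rw [← hUS, hU1, Matrix.one_mul]
    have hPQS : P * Q = S := by
      have : (Q * P)ᴴ = Sᴴ := congrArg _ hQPS
      rwa [Matrix.conjTranspose_mul, hPH, hQH, hSH] at this
    rw [hmsA, hmsB, hPQS]
    exact hS
  · -- PSD → equality
    intro hPQ
    rw [hmsA, hmsB] at hPQ
    rw [hmsA, hmsB, hmsT]
    have hcomm : Q * P = P * Q := by
      have := hPQ.isHermitian
      calc Q * P = (P * Q)ᴴ := by rw [Matrix.conjTranspose_mul, hPH, hQH]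
        _ = P * Q := this
    have hsq : (P * Q) ^ 2 = P * B * P := by
      rw [pow_two]
      calc P * Q * (P * Q) = P * Q * (Q * P) := by rw [hcomm]
        _ = P * (Q * Q) * P := by noncomm_ring
        _ = P * B * P := by rw [hQQ]
    have : P * Q = S :=
      ((CFC.sqrt_eq_iff _ _ hT.nonneg hPQ.nonneg).mpr (by rw [← pow_two]; exact hsq)).symm
    rw [this]
end
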